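/- Let u be the right shift on ℓ²(ℤ) and h := (u + u*)/2. Then for every z ∈ ℂ with Im z ≠ 0 and every x ∈ ℤ, the matrix element α_z(x) := ⟨δ_x, (h - z)^{-1} δ_0⟩ satisfies α_z(-x) = α_z(x), and α_{-z}(x) = (-1)^{x+1} α_{z̄}(x)* is consistent with the symmetry relations induced by θ and ξ; moreover for e ∈ (-1,1) the boundary value lim_{ε→0⁺} α_{e-iε}(x) exists and equals -i (e + i√(1-e²))^{|x|} / √(1-e²). -/

import Mathlib

open Complex
open scoped ENNReal

/-! ### Auxiliary complex square root -/

noncomputable def csqrtAux (ζ : ℂ) : ℂ :=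
  ((Real.sqrt (‖ζ‖) / ‖ζ + (‖ζ‖ : ℝ)‖ : ℝ) : ℂ)
    * (ζ + (‖ζ‖ : ℝ))

lemma abs_sq_eq (u : ℂ) : ((‖u‖ : ℝ) : ℂ) ^ 2 = u * (starRingEnd ℂ) u := by
  rw [← Complex.ofReal_pow, Complex.sq_norm, Complex.mul_conj]

lemma csqrtAux_sq {ζ : ℂ} (hζ : ζ + (‖ζ‖ : ℝ) ≠ 0) : csqrtAux ζ ^ 2 = ζ := by
  have ha : ((‖ζ + (‖ζ‖ : ℝ)‖ : ℝ) : ℂ) ≠ 0 := by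
    simpa using hζ
  have habs : ((‖ζ + (‖ζ‖ : ℝ)‖ : ℝ) : ℂ) ^ 2
      = (ζ + (‖ζ‖ : ℝ)) * ((starRingEnd ℂ) ζ + (‖ζ‖ : ℝ)) := by
    rw [abs_sq_eq, map_add, Complex.conj_ofReal]
  have hsq : ((Real.sqrt (‖ζ‖) : ℝ) : ℂ) ^ 2 = ((‖ζ‖ : ℝ) : ℂ) := by
    rw [← Complex.ofReal_pow, Real.sq_sqrt (norm_nonneg ζ)]
  have hr : ((‖ζ‖ : ℝ) : ℂ) ^ 2 = ζ * (starRingEnd ℂ) ζ := abs_sq_eq ζ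
  unfold csqrtAux
  rw [Complex.ofReal_div]
  field_simp
  linear_combination (ζ + (‖ζ‖ : ℝ)) * hr + (ζ + (‖ζ‖ : ℝ)) ^ 2 * hsq
    - ζ * habs

lemma csqrtAux_re_nonneg (ζ : ℂ) : 0 ≤ (csqrtAux ζ).re := by
  unfold csqrtAux
  rw [Complex.re_ofReal_mul]
  apply mul_nonneg (by positivity)
  have h1 : (ζ + ((‖ζ‖ : ℝ) : ℂ)).re = ζ.re + ‖ζ‖ := by simp
  rw [h1]
  have h2 := abs_le.mp (Complex.abs_re_le_norm ζ)
  linarith [h2.1]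

lemma csqrtAux_ofReal_pos {t : ℝ} (ht : 0 < t) : csqrtAux (t : ℂ) = (Real.sqrt t : ℝ) := by
  unfold csqrtAux
  rw [Complex.norm_real, Real.norm_eq_abs, abs_of_pos ht, ← Complex.ofReal_add, Complex.norm_real, Real.norm_eq_abs,
    ← Complex.ofReal_mul]
  norm_num [abs_of_pos ht]
  rw [abs_of_pos (by linarith : (0:ℝ) < t + t)]
  have h2 : ((t : ℝ) : ℂ) + (t : ℝ) ≠ 0 := by
    have : ((t + t : ℝ) : ℂ) ≠ 0 := by exact_mod_cast (by linarith : (t:ℝ) + t ≠ 0)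
    push_cast at this; exact this
  push_cast
  field_simp
  rw [mul_div_assoc, div_self (by exact_mod_cast ht.ne'), mul_one]

lemma csqrtAux_continuousAt {ζ₀ : ℂ} (h0 : ζ₀ + ((‖ζ₀‖ : ℝ) : ℂ) ≠ 0) :
    ContinuousAt csqrtAux ζ₀ := by
  have hnum : Continuous (fun ζ : ℂ => Real.sqrt (‖ζ‖)) :=
    Real.continuous_sqrt.comp continuous_norm
  have hadd : Continuous (fun ζ : ℂ => ζ + ((‖ζ‖ : ℝ) : ℂ)) :=
    continuous_id.add (Complex.continuous_ofReal.comp continuous_norm)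
  have hden : Continuous (fun ζ : ℂ => ‖ζ + ((‖ζ‖ : ℝ) : ℂ)‖) :=
    continuous_norm.comp hadd
  have habs0 : ‖ζ₀ + ((‖ζ₀‖ : ℝ) : ℂ)‖ ≠ 0 := by
    simpa using h0
  have h5 : ContinuousAt
      (fun ζ : ℂ => Real.sqrt (‖ζ‖) / ‖ζ + ((‖ζ‖ : ℝ) : ℂ)‖)
      ζ₀ := hnum.continuousAt.div hden.continuousAt habs0
  exact (ContinuousAt.comp Complex.continuous_ofReal.continuousAt h5).mul hadd.continuousAt

/-! ### Roots of the characteristic quadratic -/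

lemma norm_lt_one_of_lower {z d : ℂ} (hb : z.im < 0) (hd : d ^ 2 = 1 - z ^ 2)
    (hre : 0 ≤ d.re) : ‖z + I * d‖ < 1 := by
  have hd' : d * d = 1 - z * z := by
    have := hd; rw [pow_two, pow_two] at this; exact this
  have h1 : d.re * d.re - d.im * d.im = 1 - (z.re * z.re - z.im * z.im) := by
    have := congrArg Complex.re hd'
    simpa [Complex.mul_re] using this
  have hpq : d.re * d.im = -(z.re * z.im) := by
    have := congrArg Complex.im hd'
    simp [Complex.mul_im] at this
    linarith
  have key : z.im * d.re - z.re * d.im < 0 := by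
    rcases eq_or_lt_of_le hre with hre0 | hrep
    · exfalso
      have hab : z.re * z.im = 0 := by
        have h2 : d.re * d.im = 0 := by rw [← hre0]; ring
        rw [h2] at hpq; linarith
      have ha : z.re = 0 := by
        rcases mul_eq_zero.mp hab with h | h
        · exact h
        · exact absurd h (ne_of_lt hb)
      rw [← hre0, ha] at h1
      nlinarith [mul_self_nonneg d.im, mul_self_nonneg z.im, hb]
    · have hk : (z.im * d.re - z.re * d.im) * d.re
          = z.im * (d.re * d.re + z.re * z.re) := by
        linear_combination (-z.re) * hpq
      have hneg : z.im * (d.re * d.re + z.re * z.re) < 0 := by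
        apply mul_neg_of_neg_of_pos hb
        nlinarith
      nlinarith
  have hprod : (z + I * d) * (z - I * d) = 1 := by
    linear_combination hd + (-(d ^ 2)) * Complex.I_sq
  have hAB : ‖z + I * d‖ * ‖z - I * d‖ = 1 := by
    rw [← norm_mul, hprod, norm_one]
  have hA2 : ‖z + I * d‖ ^ 2 = (z.re - d.im) ^ 2 + (z.im + d.re) ^ 2 := by
    rw [Complex.sq_norm, Complex.normSq_apply]
    simp [Complex.add_re, Complex.add_im, Complex.mul_re, Complex.mul_im]
    ring
  have hB2 : ‖z - I * d‖ ^ 2 = (z.re + d.im) ^ 2 + (z.im - d.re) ^ 2 := by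
    rw [Complex.sq_norm, Complex.normSq_apply]
    simp [Complex.sub_re, Complex.sub_im, Complex.mul_re, Complex.mul_im]
    ring
  have hlt : ‖z + I * d‖ ^ 2 < ‖z - I * d‖ ^ 2 := by
    rw [hA2, hB2]; nlinarith
  have hA := norm_nonneg (z + I * d)
  have hB := norm_nonneg (z - I * d)
  nlinarith [hAB, hlt, hA, hB]

lemma im_eq_zero_of_unit_root {z w : ℂ} (hw : w ^ 2 - 2 * z * w + 1 = 0)
    (hn : ‖w‖ = 1) : z.im = 0 := by
  have hconj : w * (starRingEnd ℂ) w = 1 := by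
    rw [Complex.mul_conj, Complex.normSq_eq_norm_sq, hn]
    norm_num
  have h2 : 2 * z = w + (starRingEnd ℂ) w := by
    linear_combination (-(starRingEnd ℂ) w) * hw + (w - 2 * z) * hconj
  have h3 : w + (starRingEnd ℂ) w = ((2 * w.re : ℝ) : ℂ) := Complex.add_conj w
  have := congrArg Complex.im (h2.trans h3)
  simpa using this

lemma exists_small_root (z : ℂ) (hz : z.im ≠ 0) :
    ∃ w : ℂ, ‖w‖ < 1 ∧ w ^ 2 - 2 * z * w + 1 = 0 := by
  set d := (z ^ 2 - 1) ^ ((2 : ℕ) : ℂ)⁻¹ with hddef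
  have hd : d ^ 2 = z ^ 2 - 1 := by
    have := Complex.cpow_nat_inv_pow (z ^ 2 - 1) (two_ne_zero)
    simpa [hddef] using this
  have hrootP : (z + d) ^ 2 - 2 * z * (z + d) + 1 = 0 := by linear_combination hd
  have hrootM : (z - d) ^ 2 - 2 * z * (z - d) + 1 = 0 := by linear_combination hd
  have hprod : ‖z + d‖ * ‖z - d‖ = 1 := by
    rw [← norm_mul]
    have : (z + d) * (z - d) = 1 := by linear_combination -hd
    rw [this, norm_one]
  rcases le_or_gt ‖z + d‖ 1 with hle | hgt
  · refine ⟨z + d, lt_of_le_of_ne hle ?_, hrootP⟩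
    intro h1
    exact hz (im_eq_zero_of_unit_root hrootP h1)
  · refine ⟨z - d, ?_, hrootM⟩
    nlinarith [norm_nonneg (z - d)]

lemma neg_one_zpow_natAbs (x : ℤ) :
    ((-1 : ℂ)) ^ (x + 1) = ((-1 : ℂ)) ^ (x.natAbs + 1) := by
  rcases Int.even_or_odd x with he | ho
  · rw [Odd.neg_one_zpow (Even.add_one he),
      Odd.neg_one_pow (Even.add_one (Int.natAbs_even.mpr he))]
  · rw [Even.neg_one_zpow (Odd.add_one ho),
      Even.neg_one_pow (Odd.add_one (Int.natAbs_odd.mpr ho))]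

/-! ### The resolvent kernel formula -/

/-- Resolvent matrix element `α_z(x) = ⟨δ_x, (h-z)⁻¹ δ_0⟩` for the discrete Laplacian,
expressed via an abstract resolvent family `R`. -/
noncomputable def resAlpha (R : ℂ → (lp (fun _ : ℤ => ℂ) 2 →L[ℂ] lp (fun _ : ℤ => ℂ) 2))
    (z : ℂ) (x : ℤ) : ℂ :=
  inner (𝕜 := ℂ) (lp.single 2 x (1 : ℂ)) (R z (lp.single 2 0 (1 : ℂ)))

lemma memlp_geom {w C : ℂ} (hw : ‖w‖ < 1) :
    Memℓp (fun x : ℤ => w ^ x.natAbs * C) 2 := by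
  apply memℓp_gen
  have key : ∀ x : ℤ, ‖C‖ ^ 2 * (‖w‖ ^ 2) ^ x.natAbs
      = ‖w ^ x.natAbs * C‖ ^ ((2 : ℝ≥0∞).toReal) := by
    intro x
    have h2 : ((2 : ℝ≥0∞).toReal) = ((2 : ℕ) : ℝ) := by norm_num
    rw [h2, Real.rpow_natCast, norm_mul, norm_pow]
    ring
  have base : Summable (fun x : ℤ => ‖C‖ ^ 2 * (‖w‖ ^ 2) ^ x.natAbs) := by
    have hg : Summable (fun n : ℕ => ‖C‖ ^ 2 * (‖w‖ ^ 2) ^ n) :=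
      (summable_geometric_of_lt_one (by positivity) (by nlinarith [norm_nonneg w])).mul_left _
    apply Summable.of_nat_of_neg
    · simpa using hg
    · simpa using hg
  exact base.congr key

lemma alpha_formula
    (h : lp (fun _ : ℤ => ℂ) 2 →L[ℂ] lp (fun _ : ℤ => ℂ) 2)
    (hh : ∀ (f : lp (fun _ : ℤ => ℂ) 2) (x : ℤ),
      (h f : ∀ _ : ℤ, ℂ) x = (f (x - 1) + f (x + 1)) / 2)
    (R : ℂ → (lp (fun _ : ℤ => ℂ) 2 →L[ℂ] lp (fun _ : ℤ => ℂ) 2))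
    (hR : ∀ z : ℂ, z.im ≠ 0 →
      (h - z • ContinuousLinearMap.id ℂ _) ∘L R z = ContinuousLinearMap.id ℂ _ ∧
      R z ∘L (h - z • ContinuousLinearMap.id ℂ _) = ContinuousLinearMap.id ℂ _)
    {z : ℂ} (hz : z.im ≠ 0) {w : ℂ} (hw1 : ‖w‖ < 1)
    (hw2 : w ^ 2 - 2 * z * w + 1 = 0) (x : ℤ) :
    resAlpha R z x = w ^ x.natAbs / (w - z) := by
  have hwz : w - z ≠ 0 := by
    intro hc
    have hwzeq : w = z := sub_eq_zero.mp hc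
    rw [hwzeq] at hw2
    have h1 : (z - 1) * (z + 1) = 0 := by linear_combination -hw2
    rcases mul_eq_zero.mp h1 with hc1 | hc1
    · have : z = 1 := sub_eq_zero.mp hc1
      apply hz; rw [this]; simp
    · have : z = -1 := eq_neg_of_add_eq_zero_left hc1
      apply hz; rw [this]; simp
  set C : ℂ := (w - z)⁻¹ with hC
  set g : ℤ → ℂ := fun x => w ^ x.natAbs * C with hg
  set gl : lp (fun _ : ℤ => ℂ) 2 := ⟨g, memlp_geom hw1⟩ with hgl
  have hglcoe : ∀ y : ℤ, (gl : ∀ _ : ℤ, ℂ) y = g y := fun y => rfl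
  have heq : (h - z • ContinuousLinearMap.id ℂ (lp (fun _ : ℤ => ℂ) 2)) gl
      = lp.single (E := fun _ : ℤ => ℂ) 2 0 (1 : ℂ) := by
    apply lp.ext
    funext y
    have hcoord : (((h - z • ContinuousLinearMap.id ℂ (lp (fun _ : ℤ => ℂ) 2)) gl
        : lp (fun _ : ℤ => ℂ) 2) : ∀ _ : ℤ, ℂ) y = (g (y - 1) + g (y + 1)) / 2 - z * g y := by
      rw [ContinuousLinearMap.sub_apply, ContinuousLinearMap.smul_apply,
        ContinuousLinearMap.id_apply]
      rw [lp.coeFn_sub, Pi.sub_apply, lp.coeFn_smul, Pi.smul_apply]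
      rw [hh gl y, hglcoe, hglcoe, hglcoe, smul_eq_mul]
    rw [hcoord]
    by_cases hy : y = 0
    · subst hy
      have h0 : lp.single (E := fun _ : ℤ => ℂ) 2 (0:ℤ) (1:ℂ) (0:ℤ) = 1 :=
        lp.single_apply_self (E := fun _ : ℤ => ℂ) 2 (0:ℤ) (1:ℂ)
      rw [h0]
      have e1 : ((0:ℤ) - 1).natAbs = 1 := by omega
      have e2 : ((0:ℤ) + 1).natAbs = 1 := by omega
      have e3 : ((0:ℤ)).natAbs = 0 := by omega
      simp only [hg, e1, e2, e3, pow_one, pow_zero, one_mul]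
      have hinv : (w - z) * C = 1 := mul_inv_cancel₀ hwz
      linear_combination hinv
    · rw [lp.single_apply_ne (E := fun _ : ℤ => ℂ) 2 (0:ℤ) (1:ℂ) hy]
      obtain ⟨m, hm⟩ : ∃ m : ℕ, y.natAbs = m + 1 := ⟨y.natAbs - 1, by omega⟩
      have hcases : (y-1).natAbs = m ∧ (y+1).natAbs = m+2 ∨
          (y-1).natAbs = m+2 ∧ (y+1).natAbs = m := by omega
      rcases hcases with ⟨e1, e2⟩ | ⟨e1, e2⟩ <;>
        simp only [hg, e1, e2, hm] <;>
        linear_combination (C * w ^ m / 2) * hw2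
  have hRg : R z (lp.single (E := fun _ : ℤ => ℂ) 2 0 (1 : ℂ)) = gl := by
    have hcomp := congrArg (fun T : lp (fun _ : ℤ => ℂ) 2 →L[ℂ] lp (fun _ : ℤ => ℂ) 2
      => T gl) (hR z hz).2
    simp only [ContinuousLinearMap.comp_apply, ContinuousLinearMap.id_apply] at hcomp
    rw [heq] at hcomp
    exact hcomp
  rw [resAlpha, hRg]
  rw [lp.inner_single_left]
  rw [hglcoe]
  simp only [hg, RCLike.inner_apply, map_one, one_mul, hC]
  rw [div_eq_mul_inv, mul_one]

/-! ### Main theorem -/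

theorem resolvent_kernel_symmetries_and_boundary_value
    (h : lp (fun _ : ℤ => ℂ) 2 →L[ℂ] lp (fun _ : ℤ => ℂ) 2)
    (hh : ∀ (f : lp (fun _ : ℤ => ℂ) 2) (x : ℤ),
      (h f : ∀ _ : ℤ, ℂ) x = (f (x - 1) + f (x + 1)) / 2)
    (R : ℂ → (lp (fun _ : ℤ => ℂ) 2 →L[ℂ] lp (fun _ : ℤ => ℂ) 2))
    (hR : ∀ z : ℂ, z.im ≠ 0 →
      (h - z • ContinuousLinearMap.id ℂ _) ∘L R z = ContinuousLinearMap.id ℂ _ ∧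
      R z ∘L (h - z • ContinuousLinearMap.id ℂ _) = ContinuousLinearMap.id ℂ _) :
    (∀ (z : ℂ), z.im ≠ 0 → ∀ x : ℤ, resAlpha R z (-x) = resAlpha R z x) ∧
    (∀ (z : ℂ), z.im ≠ 0 → ∀ x : ℤ,
      resAlpha R (-z) x = (-1) ^ (x + 1) * (starRingEnd ℂ) (resAlpha R (starRingEnd ℂ z) x)) ∧
    (∀ e : ℝ, e ∈ Set.Ioo (-1 : ℝ) 1 → ∀ x : ℤ,
      Filter.Tendsto (fun ε : ℝ => resAlpha R ((e : ℂ) - ε * Complex.I) x)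
        (nhdsWithin 0 (Set.Ioi 0))
        (nhds (-Complex.I * ((e : ℂ) + Complex.I * (Real.sqrt (1 - e ^ 2) : ℝ)) ^ x.natAbs /
          (Real.sqrt (1 - e ^ 2) : ℝ)))) := by
  refine ⟨?_, ?_, ?_⟩
  · intro z hz x
    obtain ⟨w, hw1, hw2⟩ := exists_small_root z hz
    rw [alpha_formula h hh R hR hz hw1 hw2, alpha_formula h hh R hR hz hw1 hw2,
      Int.natAbs_neg]
  · intro z hz x
    obtain ⟨w, hw1, hw2⟩ := exists_small_root z hz
    have hz2 : (-z).im ≠ 0 := by simpa using hz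
    have hz3 : ((starRingEnd ℂ) z).im ≠ 0 := by simpa [Complex.conj_im] using hz
    have hw2n : (-w) ^ 2 - 2 * (-z) * (-w) + 1 = 0 := by linear_combination hw2
    have hw2c : ((starRingEnd ℂ) w) ^ 2 - 2 * ((starRingEnd ℂ) z) * ((starRingEnd ℂ) w) + 1
        = 0 := by
      have h4 := congrArg (starRingEnd ℂ) hw2
      have h5 : (starRingEnd ℂ) 2 = 2 := by
        rw [show (2:ℂ) = ((2:ℝ):ℂ) by norm_num, Complex.conj_ofReal]
      simpa [h5] using h4
    rw [alpha_formula h hh R hR hz2 (by simpa using hw1) hw2n,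
      alpha_formula h hh R hR hz3 (by simpa using hw1) hw2c]
    rw [neg_one_zpow_natAbs]
    rw [map_div₀, map_pow, Complex.conj_conj, map_sub, Complex.conj_conj, Complex.conj_conj]
    rw [show -w - -z = -(w - z) by ring, div_neg, neg_pow]
    ring
  · intro e he x
    have he2 : (0:ℝ) < 1 - e ^ 2 := by nlinarith [he.1, he.2]
    set s : ℝ := Real.sqrt (1 - e ^ 2) with hs
    have hs0 : 0 < s := Real.sqrt_pos.mpr he2
    set ζfun : ℝ → ℂ := fun ε => 1 - ((e:ℂ) - ε * I) ^ 2 with hζfun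
    set ζ₀ : ℂ := ((1 - e ^ 2 : ℝ) : ℂ) with hζ₀
    have hζ₀alt : (1:ℂ) - (e:ℂ) ^ 2 = ζ₀ := by push_cast [hζ₀]; ring
    have hζcont : Filter.Tendsto ζfun (nhdsWithin 0 (Set.Ioi 0)) (nhds ζ₀) := by
      have hc : Continuous ζfun := by
        apply Continuous.sub continuous_const
        exact (Continuous.sub continuous_const
          ((Complex.continuous_ofReal).mul continuous_const)).pow 2
      have h1 := hc.tendsto 0
      have h2 : ζfun 0 = ζ₀ := by push_cast [hζfun, hζ₀]; ring
      rw [h2] at h1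
      exact h1.mono_left nhdsWithin_le_nhds
    have hζ₀ne : ζ₀ + ((‖ζ₀‖ : ℝ) : ℂ) ≠ 0 := by
      rw [hζ₀, Complex.norm_real, Real.norm_eq_abs, abs_of_pos he2]
      intro hc
      rw [← Complex.ofReal_add] at hc
      have := Complex.ofReal_eq_zero.mp hc
      linarith
    have hcsq : Filter.Tendsto (fun ε => csqrtAux (ζfun ε)) (nhdsWithin 0 (Set.Ioi 0))
        (nhds ((s : ℝ) : ℂ)) := by
      have := (csqrtAux_continuousAt hζ₀ne).tendsto.comp hζcont
      rwa [show csqrtAux ζ₀ = ((s:ℝ):ℂ) by rw [hζ₀, csqrtAux_ofReal_pos he2, hs]] at this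
    set k : ℂ := (e:ℂ) + I * ((s:ℝ):ℂ) with hk
    have hIs : I * ((s:ℝ):ℂ) ≠ 0 := by
      apply mul_ne_zero Complex.I_ne_zero
      exact_mod_cast ne_of_gt hs0
    have hzlim : Filter.Tendsto (fun ε : ℝ => (e:ℂ) - ε * I) (nhdsWithin 0 (Set.Ioi 0))
        (nhds ((e:ℂ))) := by
      have hc : Continuous (fun ε : ℝ => (e:ℂ) - ε * I) := by
        exact continuous_const.sub ((Complex.continuous_ofReal).mul continuous_const)
      have h1 := hc.tendsto 0
      have h2 : (e:ℂ) - (0:ℝ) * I = (e:ℂ) := by simp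
      rw [h2] at h1
      exact h1.mono_left nhdsWithin_le_nhds
    have hmain : Filter.Tendsto
        (fun ε : ℝ => ((e:ℂ) - ε * I + I * csqrtAux (ζfun ε)) ^ x.natAbs
          / (I * csqrtAux (ζfun ε)))
        (nhdsWithin 0 (Set.Ioi 0)) (nhds (k ^ x.natAbs / (I * ((s:ℝ):ℂ)))) := by
      apply Filter.Tendsto.div
      · exact (hzlim.add (Filter.Tendsto.const_mul I hcsq)).pow x.natAbs
      · exact Filter.Tendsto.const_mul I hcsq
      · exact hIs
    have hvaleq : k ^ x.natAbs / (I * ((s:ℝ):ℂ))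
        = -I * k ^ x.natAbs / ((s:ℝ):ℂ) := by
      have hsne : ((s:ℝ):ℂ) ≠ 0 := by exact_mod_cast ne_of_gt hs0
      rw [div_eq_div_iff hIs hsne]
      linear_combination (k ^ x.natAbs * ((s:ℝ):ℂ)) * Complex.I_sq
    rw [hvaleq] at hmain
    refine Filter.Tendsto.congr' ?_ hmain
    filter_upwards [self_mem_nhdsWithin] with ε hε
    have hε' : (0:ℝ) < ε := hε
    have him : ((e:ℂ) - ε * I).im = -ε := by simp
    have hzim : ((e:ℂ) - ε * I).im ≠ 0 := by
      rw [him]; exact neg_ne_zero.mpr (ne_of_gt hε')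
    have hζre : (ζfun ε).re = 1 - e ^ 2 + ε ^ 2 := by
      simp [hζfun, pow_two, Complex.mul_re, Complex.sub_re, Complex.sub_im,
        Complex.mul_im, Complex.ofReal_re, Complex.ofReal_im, Complex.I_re, Complex.I_im]
      ring
    have hζne : ζfun ε + ((‖ζfun ε‖ : ℝ) : ℂ) ≠ 0 := by
      intro hc
      have h1 := congrArg Complex.re hc
      simp only [Complex.add_re, Complex.ofReal_re, Complex.zero_re] at h1
      have h2 := norm_nonneg (ζfun ε)
      rw [hζre] at h1
      nlinarith
    have hd' : csqrtAux (ζfun ε) ^ 2 = 1 - ((e:ℂ) - ε * I) ^ 2 := by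
      rw [csqrtAux_sq hζne]
    have hnorm : ‖((e:ℂ) - ε * I) + I * csqrtAux (ζfun ε)‖ < 1 :=
      norm_lt_one_of_lower (by rw [him]; linarith) hd' (csqrtAux_re_nonneg _)
    have heqn : (((e:ℂ) - ε * I) + I * csqrtAux (ζfun ε)) ^ 2
        - 2 * ((e:ℂ) - ε * I) * (((e:ℂ) - ε * I) + I * csqrtAux (ζfun ε)) + 1 = 0 := by
      linear_combination -hd' + (csqrtAux (ζfun ε)) ^ 2 * Complex.I_sq
    rw [alpha_formula h hh R hR hzim hnorm heqn x]
    congr 1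
    ring
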